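/- Let p > 2, q = p/(p-1), δ > 0, and Q the Nazarov–Treil function. In the good region Ω_g = {(ζ,η) : |ζ|^p > |η|^q > 0}, the mixed Hessian blocks vanish: ∂²_{ζᵢηⱼ} Q = 0 for all i, j ∈ {1,2}, and moreover H₁(Q)(ζ,η) + tan φ · I₁(Q)(ζ,η) = (p+2δ)|ζ|^{p-2} D_{p,φ}(ζ) and H₃(Q)(ζ,η) - tan φ · I₃(Q)(ζ,η) = (q + (2-q)δ)|η|^{q-2} D_{q,-φ}(η) for any φ ∈ (-π/2, π/2). -/

import Mathlib

set_option maxHeartbeats 2000000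

noncomputable section
open Real Matrix

def Kmat (α : ℝ) : Matrix (Fin 2) (Fin 2) ℝ :=
  !![Real.cos α, Real.sin α; Real.sin α, -Real.cos α]

def Omat (φ : ℝ) : Matrix (Fin 2) (Fin 2) ℝ :=
  !![Real.cos φ, -Real.sin φ; Real.sin φ, Real.cos φ]

/-- The matrix `D_{r,φ}(v)` of Bakry, for `v ∈ ℝ² ≅ ℂ`. -/
def DmatC (r φ : ℝ) (v : ℂ) : Matrix (Fin 2) (Fin 2) ℝ :=
  (r / 2) • ((1 : Matrix (Fin 2) (Fin 2) ℝ) +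
    ((1 - 2 / r) / Real.cos φ) • Kmat (2 * Complex.arg v - φ))

def qexp (p : ℝ) : ℝ := p / (p - 1)

/-- The Nazarov–Treil Bellman function on `ℂ × ℂ ≅ ℝ² × ℝ²`. -/
def Q (p δ : ℝ) (ζ η : ℂ) : ℝ :=
  if ‖ζ‖ ^ p ≤ ‖η‖ ^ qexp p then
    ‖ζ‖ ^ p + ‖η‖ ^ qexp p +
      δ * (‖ζ‖ ^ (2 : ℝ) * ‖η‖ ^ (2 - qexp p))
  else
    ‖ζ‖ ^ p + ‖η‖ ^ qexp p +
      δ * ((2 / p) * ‖ζ‖ ^ p + (2 / qexp p - 1) * ‖η‖ ^ qexp p)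

/-- Coordinate directions in `ℂ ≅ ℝ²`. -/
def dir : Fin 2 → ℂ := ![1, Complex.I]

/-- Partial derivative of `Q` in the `i`-th coordinate of the `ζ` variable. -/
def dζ (p δ : ℝ) (i : Fin 2) (ζ η : ℂ) : ℝ :=
  deriv (fun t : ℝ => Q p δ (ζ + (t : ℂ) * dir i) η) 0

/-- Partial derivative of `Q` in the `i`-th coordinate of the `η` variable. -/
def dη (p δ : ℝ) (i : Fin 2) (ζ η : ℂ) : ℝ :=
  deriv (fun t : ℝ => Q p δ ζ (η + (t : ℂ) * dir i)) 0

/-- The `ζζ` block of the Hessian of `Q`: `(H₁)ᵢⱼ = ∂²_{ζᵢζⱼ} Q`. -/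
def H1 (p δ : ℝ) (ζ η : ℂ) : Matrix (Fin 2) (Fin 2) ℝ :=
  Matrix.of fun i j => deriv (fun s : ℝ => dζ p δ j (ζ + (s : ℂ) * dir i) η) 0

/-- The mixed `ζη` block of the Hessian of `Q`: `(H₂)ᵢⱼ = ∂²_{ζᵢηⱼ} Q`. -/
def H2 (p δ : ℝ) (ζ η : ℂ) : Matrix (Fin 2) (Fin 2) ℝ :=
  Matrix.of fun i j => deriv (fun s : ℝ => dη p δ j (ζ + (s : ℂ) * dir i) η) 0

/-- The `ηη` block of the Hessian of `Q`: `(H₃)ᵢⱼ = ∂²_{ηᵢηⱼ} Q`. -/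
def H3 (p δ : ℝ) (ζ η : ℂ) : Matrix (Fin 2) (Fin 2) ℝ :=
  Matrix.of fun i j => deriv (fun s : ℝ => dη p δ j ζ (η + (s : ℂ) * dir i)) 0

def I1 (p δ : ℝ) (ζ η : ℂ) : Matrix (Fin 2) (Fin 2) ℝ :=
  !![H1 p δ ζ η 0 1, (H1 p δ ζ η 1 1 - H1 p δ ζ η 0 0) / 2;
     (H1 p δ ζ η 1 1 - H1 p δ ζ η 0 0) / 2, -(H1 p δ ζ η 0 1)]

def I2 (p δ : ℝ) (ζ η : ℂ) : Matrix (Fin 2) (Fin 2) ℝ :=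
  (1 / 2 : ℝ) •
    !![H2 p δ ζ η 1 0 - H2 p δ ζ η 0 1, H2 p δ ζ η 0 0 + H2 p δ ζ η 1 1;
       -(H2 p δ ζ η 0 0) - H2 p δ ζ η 1 1, H2 p δ ζ η 1 0 - H2 p δ ζ η 0 1]

def I3 (p δ : ℝ) (ζ η : ℂ) : Matrix (Fin 2) (Fin 2) ℝ :=
  !![H3 p δ ζ η 0 1, (H3 p δ ζ η 1 1 - H3 p δ ζ η 0 0) / 2;
     (H3 p δ ζ η 1 1 - H3 p δ ζ η 0 0) / 2, -(H3 p δ ζ η 0 1)]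

/-! ### Auxiliary material -/

def coordC : Fin 2 → ℂ → ℝ := fun i z => if i = 0 then z.re else z.im

lemma coordC_add_smul (i j : Fin 2) (ζ : ℂ) (s : ℝ) :
    coordC j (ζ + (s : ℂ) * dir i) = coordC j ζ + s * (if i = j then 1 else 0) := by
  fin_cases i <;> fin_cases j <;> simp [coordC, dir]

lemma normSq_add_smul (i : Fin 2) (ζ : ℂ) (t : ℝ) :
    Complex.normSq (ζ + (t : ℂ) * dir i) = Complex.normSq ζ + 2 * coordC i ζ * t + t ^ 2 := by
  fin_cases i <;> simp [coordC, dir, Complex.normSq_apply] <;> ring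

lemma abs_rpow_eq (z : ℂ) (r : ℝ) :
    ‖z‖ ^ r = Complex.normSq z ^ (r / 2) := by
  rw [Complex.norm_def, Real.sqrt_eq_rpow, ← Real.rpow_mul (Complex.normSq_nonneg z)]
  ring_nf

lemma hdAbsRpow (i : Fin 2) (ζ : ℂ) (hζ : ζ ≠ 0) (r : ℝ) :
    HasDerivAt (fun t : ℝ => ‖ζ + (t : ℂ) * dir i‖ ^ r)
      (r * ‖ζ‖ ^ (r - 2) * coordC i ζ) 0 := by
  have hns : Complex.normSq ζ ≠ 0 := by simpa using hζ
  have h1 : (fun t : ℝ => ‖ζ + (t : ℂ) * dir i‖ ^ r)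
      = fun t : ℝ => (Complex.normSq ζ + 2 * coordC i ζ * t + t ^ 2) ^ (r / 2) := by
    funext t; rw [abs_rpow_eq, normSq_add_smul]
  rw [h1]
  have hg : HasDerivAt (fun t : ℝ => Complex.normSq ζ + 2 * coordC i ζ * t + t ^ 2)
      (2 * coordC i ζ) 0 := by
    have := ((hasDerivAt_id (0:ℝ)).const_mul (2 * coordC i ζ)).const_add (Complex.normSq ζ)
    have h2 := (hasDerivAt_pow 2 (0:ℝ))
    have h3 := this.add h2
    simp at h3
    exact h3
  have := hg.rpow_const (p := r / 2) (by left; simpa using hns)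
  convert this using 1
  rw [abs_rpow_eq]
  simp only [mul_zero, add_zero, ne_eq, OfNat.ofNat_ne_zero, not_false_eq_true, zero_pow]
  ring_nf

lemma hasDerivAt_entry (i j : Fin 2) (ζ : ℂ) (hζ : ζ ≠ 0) (r : ℝ) :
    HasDerivAt (fun s : ℝ => ‖ζ + (s : ℂ) * dir i‖ ^ (r - 2) * coordC j (ζ + (s : ℂ) * dir i))
      ((r - 2) * ‖ζ‖ ^ (r - 4) * coordC i ζ * coordC j ζ
        + ‖ζ‖ ^ (r - 2) * (if i = j then 1 else 0)) 0 := by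
  have hf := hdAbsRpow i ζ hζ (r - 2)
  have hgl : HasDerivAt (fun s : ℝ => coordC j (ζ + (s : ℂ) * dir i)) (if i = j then 1 else 0) 0 := by
    have h1 : (fun s : ℝ => coordC j (ζ + (s : ℂ) * dir i))
        = fun s : ℝ => coordC j ζ + s * (if i = j then 1 else 0) := by
      funext s; rw [coordC_add_smul]
    rw [h1]
    simpa using ((hasDerivAt_id (0:ℝ)).mul_const (if i = j then 1 else 0)).const_add (coordC j ζ)
  have := hf.mul hgl
  have h4 : r - 2 - 2 = r - 4 := by ring
  simp [h4] at this
  exact this.congr_deriv (by split_ifs <;> simp)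

lemma cont_absRpow {c : ℝ} (hc : 0 < c) : Continuous (fun z : ℂ => ‖z‖ ^ c) :=
  continuous_iff_continuousAt.2 fun _ =>
    (Real.continuousAt_rpow_const _ _ (Or.inr hc.le)).comp continuous_norm.continuousAt

lemma good_open {p : ℝ} (hp : 0 < p) (C : ℝ) : IsOpen {z : ℂ | C < ‖z‖ ^ p} :=
  isOpen_lt continuous_const (cont_absRpow hp)

lemma good_ne_zero {p C : ℝ} (hC : 0 ≤ C) {z : ℂ} (h : C < ‖z‖ ^ p) (hp : p ≠ 0) :
    z ≠ 0 := by
  rintro rfl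
  simp [Real.zero_rpow hp] at h
  exact absurd h (not_lt.2 hC)

lemma Qgood {p δ : ℝ} {ζ η : ℂ} (h : ‖η‖ ^ qexp p < ‖ζ‖ ^ p) :
    Q p δ ζ η = (1 + 2 * δ / p) * ‖ζ‖ ^ p
      + (1 + δ * (2 / qexp p - 1)) * ‖η‖ ^ qexp p := by
  rw [Q, if_neg (not_le.2 h)]; ring

lemma ev_good_fst {p : ℝ} (hp : 0 < p) (C : ℝ) (i : Fin 2) {ζ : ℂ}
    (h : C < ‖ζ‖ ^ p) :
    ∀ᶠ s : ℝ in nhds 0, C < ‖ζ + (s : ℂ) * dir i‖ ^ p := by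
  have hc : Continuous (fun s : ℝ => ζ + (s : ℂ) * dir i) := by continuity
  have hf : ContinuousAt (fun s : ℝ => ‖ζ + (s : ℂ) * dir i‖ ^ p) 0 :=
    ((cont_absRpow hp).comp hc).continuousAt
  have := continuousAt_const.eventually_lt hf (by simpa using h)
  exact this

lemma ev_good_snd {p : ℝ} (hq : 0 < qexp p) (C : ℝ) (i : Fin 2) {η : ℂ}
    (h : ‖η‖ ^ qexp p < C) :
    ∀ᶠ s : ℝ in nhds 0, ‖η + (s : ℂ) * dir i‖ ^ qexp p < C := by
  have hc : Continuous (fun s : ℝ => η + (s : ℂ) * dir i) := by continuity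
  have hf : ContinuousAt (fun s : ℝ => ‖η + (s : ℂ) * dir i‖ ^ qexp p) 0 :=
    ((cont_absRpow hq).comp hc).continuousAt
  have := hf.eventually_lt continuousAt_const (by simpa using h)
  exact this

lemma ev_ne_zero (i : Fin 2) {η : ℂ} (hη : η ≠ 0) :
    ∀ᶠ s : ℝ in nhds 0, η + (s : ℂ) * dir i ≠ 0 := by
  have hc : Continuous (fun s : ℝ => η + (s : ℂ) * dir i) := by continuity
  have := hc.continuousAt (x := (0:ℝ)) |>.eventually_ne (by simpa using hη)
  exact this

lemma dζ_good {p δ : ℝ} (hp : 0 < p) {ζ' η' : ℂ} (j : Fin 2)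
    (h : ‖η'‖ ^ qexp p < ‖ζ'‖ ^ p) (hζ' : ζ' ≠ 0) :
    dζ p δ j ζ' η' = ((1 + 2 * δ / p) * p) * (‖ζ'‖ ^ (p - 2) * coordC j ζ') := by
  have hev := ev_good_fst hp _ j h
  have heq : (fun t : ℝ => Q p δ (ζ' + (t : ℂ) * dir j) η') =ᶠ[nhds 0]
      fun t => (1 + 2 * δ / p) * ‖ζ' + (t : ℂ) * dir j‖ ^ p
        + (1 + δ * (2 / qexp p - 1)) * ‖η'‖ ^ qexp p :=
    hev.mono fun t ht => Qgood ht
  rw [dζ, heq.deriv_eq]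
  have := (((hdAbsRpow j ζ' hζ' p).const_mul (1 + 2 * δ / p)).add_const
    ((1 + δ * (2 / qexp p - 1)) * ‖η'‖ ^ qexp p)).deriv
  rw [this]; ring

lemma dη_good {p δ : ℝ} (hq : 0 < qexp p) {ζ' η' : ℂ} (j : Fin 2)
    (h : ‖η'‖ ^ qexp p < ‖ζ'‖ ^ p) (hη' : η' ≠ 0) :
    dη p δ j ζ' η' = ((1 + δ * (2 / qexp p - 1)) * qexp p)
      * (‖η'‖ ^ (qexp p - 2) * coordC j η') := by
  have hev := ev_good_snd hq _ j h
  have heq : (fun t : ℝ => Q p δ ζ' (η' + (t : ℂ) * dir j)) =ᶠ[nhds 0]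
      fun t => (1 + 2 * δ / p) * ‖ζ'‖ ^ p
        + (1 + δ * (2 / qexp p - 1)) * ‖η' + (t : ℂ) * dir j‖ ^ qexp p :=
    hev.mono fun t ht => Qgood ht
  rw [dη, heq.deriv_eq]
  have := (((hdAbsRpow j η' hη' (qexp p)).const_mul (1 + δ * (2 / qexp p - 1))).const_add
    ((1 + 2 * δ / p) * ‖ζ'‖ ^ p)).deriv
  rw [this]; ring


lemma H1_entry {p δ : ℝ} (hp : 0 < p) {ζ η : ℂ}
    (hg : ‖η‖ ^ qexp p < ‖ζ‖ ^ p)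
    (hη : (0:ℝ) < ‖η‖ ^ qexp p) (i j : Fin 2) :
    H1 p δ ζ η i j = ((1 + 2 * δ / p) * p) *
      ((p - 2) * ‖ζ‖ ^ (p - 4) * coordC i ζ * coordC j ζ
        + ‖ζ‖ ^ (p - 2) * (if i = j then 1 else 0)) := by
  have hζ : ζ ≠ 0 := good_ne_zero hη.le hg hp.ne'
  have hev := ev_good_fst hp _ i hg
  have heq : (fun s : ℝ => dζ p δ j (ζ + (s : ℂ) * dir i) η) =ᶠ[nhds 0]
      fun s => ((1 + 2 * δ / p) * p) *
        (‖ζ + (s : ℂ) * dir i‖ ^ (p - 2) * coordC j (ζ + (s : ℂ) * dir i)) :=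
    hev.mono fun s hs => dζ_good hp j hs (good_ne_zero hη.le hs hp.ne')
  show deriv (fun s : ℝ => dζ p δ j (ζ + (s : ℂ) * dir i) η) 0 = _
  rw [heq.deriv_eq]
  exact ((hasDerivAt_entry i j ζ hζ p).const_mul ((1 + 2 * δ / p) * p)).deriv

lemma H2_zero {p δ : ℝ} (hp : 0 < p) (hq : 0 < qexp p) {ζ η : ℂ}
    (hg : ‖η‖ ^ qexp p < ‖ζ‖ ^ p)
    (hη : (0:ℝ) < ‖η‖ ^ qexp p) (i j : Fin 2) :
    H2 p δ ζ η i j = 0 := by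
  have hηne : η ≠ 0 := by rintro rfl; simp [Real.zero_rpow hq.ne'] at hη
  have hev := ev_good_fst hp _ i hg
  have heq : (fun s : ℝ => dη p δ j (ζ + (s : ℂ) * dir i) η) =ᶠ[nhds 0]
      fun _ => ((1 + δ * (2 / qexp p - 1)) * qexp p)
        * (‖η‖ ^ (qexp p - 2) * coordC j η) :=
    hev.mono fun s hs => dη_good hq j hs hηne
  show deriv (fun s : ℝ => dη p δ j (ζ + (s : ℂ) * dir i) η) 0 = 0
  rw [heq.deriv_eq, deriv_const]

lemma H3_entry {p δ : ℝ} (hq : 0 < qexp p) {ζ η : ℂ}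
    (hg : ‖η‖ ^ qexp p < ‖ζ‖ ^ p)
    (hη : (0:ℝ) < ‖η‖ ^ qexp p) (i j : Fin 2) :
    H3 p δ ζ η i j = ((1 + δ * (2 / qexp p - 1)) * qexp p) *
      ((qexp p - 2) * ‖η‖ ^ (qexp p - 4) * coordC i η * coordC j η
        + ‖η‖ ^ (qexp p - 2) * (if i = j then 1 else 0)) := by
  have hηne : η ≠ 0 := by rintro rfl; simp [Real.zero_rpow hq.ne'] at hη
  have hev := (ev_good_snd hq _ i hg).and (ev_ne_zero i hηne)
  have heq : (fun s : ℝ => dη p δ j ζ (η + (s : ℂ) * dir i)) =ᶠ[nhds 0]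
      fun s => ((1 + δ * (2 / qexp p - 1)) * qexp p)
        * (‖η + (s : ℂ) * dir i‖ ^ (qexp p - 2)
            * coordC j (η + (s : ℂ) * dir i)) :=
    hev.mono fun s hs => dη_good hq j hs.1 hs.2
  show deriv (fun s : ℝ => dη p δ j ζ (η + (s : ℂ) * dir i)) 0 = _
  rw [heq.deriv_eq]
  exact ((hasDerivAt_entry i j η hηne (qexp p)).const_mul _).deriv

theorem stmt17 (p δ φ : ℝ) (hp : 2 < p) (hδ : 0 < δ)
    (hφ : φ ∈ Set.Ioo (-(π / 2)) (π / 2)) (ζ η : ℂ)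
    (hg : ‖η‖ ^ qexp p < ‖ζ‖ ^ p) (hη : (0 : ℝ) < ‖η‖ ^ qexp p) :
    H2 p δ ζ η = 0 ∧
    H1 p δ ζ η + Real.tan φ • I1 p δ ζ η =
      ((p + 2 * δ) * ‖ζ‖ ^ (p - 2)) • DmatC p φ ζ ∧
    H3 p δ ζ η - Real.tan φ • I3 p δ ζ η =
      ((qexp p + (2 - qexp p) * δ) * ‖η‖ ^ (qexp p - 2)) • DmatC (qexp p) (-φ) η := by
  have hp0 : 0 < p := by linarith
  have hq0 : 0 < qexp p := div_pos hp0 (by linarith)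
  have hcφ : Real.cos φ ≠ 0 := (Real.cos_pos_of_mem_Ioo hφ).ne'
  have hζ : ζ ≠ 0 := good_ne_zero hη.le hg hp0.ne'
  have hηne : η ≠ 0 := by rintro rfl; simp [Real.zero_rpow hq0.ne'] at hη
  have hRζ : 0 < ‖ζ‖ := norm_pos_iff.mpr hζ
  have hRη : 0 < ‖η‖ := norm_pos_iff.mpr hηne
  refine ⟨?_, ?_, ?_⟩
  · ext i j; simpa using H2_zero hp0 hq0 hg hη i j
  · have hcos : Real.cos ζ.arg = ζ.re / ‖ζ‖ := Complex.cos_arg hζ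
    have hsin : Real.sin ζ.arg = ζ.im / ‖ζ‖ := Complex.sin_arg ζ
    have hR2 : ‖ζ‖ ^ 2 = ζ.re ^ 2 + ζ.im ^ 2 := by
      rw [Complex.sq_norm, Complex.normSq_apply]; ring
    have hA4 : ‖ζ‖ ^ (p - 4) = ‖ζ‖ ^ (p - 2) / ‖ζ‖ ^ 2 := by
      rw [show p - 4 = (p - 2) - 2 by ring, Real.rpow_sub hRζ, Real.rpow_two]
    ext i j
    have hsimp := H1_entry (δ := δ) hp0 hg hη
    fin_cases i <;> fin_cases j <;>
        simp [Matrix.add_apply, Matrix.smul_apply, I1, DmatC, Kmat, Matrix.one_apply,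
          hsimp, coordC] <;>
      simp only [Real.tan_eq_sin_div_cos, Real.cos_sub, Real.sin_sub, Real.cos_two_mul,
        Real.sin_two_mul, hcos, hsin, hA4] <;>
      field_simp
    · ring
    · rw [show ζ.im ^ 2 = ‖ζ‖ ^ 2 - ζ.re ^ 2 by linarith]; ring
    · rw [show ζ.im ^ 2 = ‖ζ‖ ^ 2 - ζ.re ^ 2 by linarith]; ring
    · rw [show ζ.im ^ 2 = ‖ζ‖ ^ 2 - ζ.re ^ 2 by linarith]; ring
  · have hcosn : Real.cos η.arg = η.re / ‖η‖ := Complex.cos_arg hηne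
    have hsinn : Real.sin η.arg = η.im / ‖η‖ := Complex.sin_arg η
    have hR2n : ‖η‖ ^ 2 = η.re ^ 2 + η.im ^ 2 := by
      rw [Complex.sq_norm, Complex.normSq_apply]; ring
    have hA4n : ‖η‖ ^ (qexp p - 4)
        = ‖η‖ ^ (qexp p - 2) / ‖η‖ ^ 2 := by
      rw [show qexp p - 4 = (qexp p - 2) - 2 by ring, Real.rpow_sub hRη, Real.rpow_two]
    have hsimp := H3_entry (δ := δ) hq0 hg hη
    ext i j
    fin_cases i <;> fin_cases j <;>
        simp [Matrix.sub_apply, Matrix.smul_apply, I3, DmatC, Kmat, Matrix.one_apply,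
          hsimp, coordC] <;>
      simp only [Real.tan_eq_sin_div_cos, Real.cos_sub, Real.sin_sub, Real.cos_two_mul,
        Real.sin_two_mul, Real.cos_neg, Real.sin_neg, Real.cos_add, Real.sin_add,
        hcosn, hsinn, hA4n] <;>
      field_simp
    · ring
    · rw [show η.im ^ 2 = ‖η‖ ^ 2 - η.re ^ 2 by linarith]; ring
    · rw [show η.im ^ 2 = ‖η‖ ^ 2 - η.re ^ 2 by linarith]; ring
    · rw [show η.im ^ 2 = ‖η‖ ^ 2 - η.re ^ 2 by linarith]; ring

end
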